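/- Let G be a finite group and σ : G → (ℂ → ℂ) a family of functions such that: (i) for every g ∈ G, σ g is analytic at 0 and σ g (0) = 0; (ii) σ 1 agrees with the identity on a neighborhood of 0; (iii) for all g, h ∈ G, σ (g·h) agrees with σ g ∘ σ h on a neighborhood of 0; (iv) the action is faithful, i.e. if σ g agrees with the identity on a neighborhood of 0 then g = 1. Define θ : G → ℂ by θ(g) = deriv (σ g) 0. Then θ(1) = 1, θ(g·h) = θ(g)·θ(h) for all g, h ∈ G, θ(g)^{|G|} = 1 for every g ∈ G (so each θ(g) is a |G|-th root of unity, in particular nonzero), θ is injective, and consequently G is a cyclic group. -/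

import Mathlib

open Filter

/-- Key analytic lemma: if `f` is analytic at `0`, fixes `0`, has derivative `1` at `0`,
and some "iterate system" `τ : ℕ → ℂ → ℂ` with `τ 0 =ᶠ id`, `τ (m+1) =ᶠ f ∘ τ m`,
`τ N =ᶠ id` for some `N ≠ 0`, then `f =ᶠ id` near `0`. -/
theorem aux_germ_id {f : ℂ → ℂ} (hfa : AnalyticAt ℂ f 0) (hf0 : f 0 = 0)
    (hfd : deriv f 0 = 1) (τ : ℕ → ℂ → ℂ)
    (hτa : ∀ m, AnalyticAt ℂ (τ m) 0) (hτ0 : ∀ m, τ m 0 = 0)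
    (hτz : τ 0 =ᶠ[nhds (0 : ℂ)] id)
    (hτs : ∀ m, τ (m + 1) =ᶠ[nhds (0 : ℂ)] (f ∘ τ m))
    (N : ℕ) (hN : N ≠ 0) (hτN : τ N =ᶠ[nhds (0 : ℂ)] id) :
    f =ᶠ[nhds (0 : ℂ)] id := by
  set h : ℂ → ℂ := fun z => f z - z with hh
  have hha : AnalyticAt ℂ h 0 := hfa.sub analyticAt_id
  by_cases htop : analyticOrderAt h 0 = ⊤
  · have := analyticOrderAt_eq_top.mp htop
    filter_upwards [this] with z hz
    have : f z - z = 0 := hz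
    simpa [sub_eq_zero] using this
  · exfalso
    obtain ⟨k, hk⟩ := (WithTop.ne_top_iff_exists).mp htop
    obtain ⟨g₀, hg₀a, hg₀0, hev⟩ := (hha.analyticOrderAt_eq_natCast (n := k)).mp hk.symm
    have hev' : ∀ᶠ z in nhds (0 : ℂ), h z = z ^ k * g₀ z := by
      simpa using hev
    -- k ≥ 2
    have hk0 : k ≠ 0 := by
      intro hk0
      apply hg₀0
      have := hev'.self_of_nhds
      simp [hk0, hh, hf0] at this
      exact this.symm
    have hk1 : k ≠ 1 := by
      intro hk1
      apply hg₀0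
      have hd : deriv h 0 = 0 := by
        have : deriv h 0 = deriv f 0 - deriv (fun z : ℂ => z) 0 :=
          deriv_sub hfa.differentiableAt differentiableAt_fun_id
      
        simp [hfd] at this
        simpa using this
      have hde : deriv h 0 = deriv (fun z => z ^ k * g₀ z) 0 :=
        Filter.EventuallyEq.deriv_eq hev'
      rw [hk1] at hde
      have : deriv (fun z : ℂ => z ^ 1 * g₀ z) 0 = g₀ 0 := by
        rw [deriv_fun_mul (by simpa using differentiableAt_fun_id.pow 1) hg₀a.differentiableAt]
        simp
      rw [hd, this] at hde
      exact hde.symm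
    have hk2 : 2 ≤ k := by omega
    set c := g₀ 0 with hc
    -- main induction
    have main : ∀ m : ℕ,
        Tendsto (fun z : ℂ => (τ m z - z) / z ^ k) (nhdsWithin 0 {0}ᶜ) (nhds ((m : ℂ) * c)) := by
      intro m
      induction m with
      | zero =>
        have : (fun z : ℂ => (τ 0 z - z) / z ^ k) =ᶠ[nhdsWithin 0 {0}ᶜ] fun _ => 0 := by
          filter_upwards [nhdsWithin_le_nhds hτz] with z hz
          simp [hz]
        rw [show ((0 : ℕ) : ℂ) * c = 0 by simp]
        exact Tendsto.congr' this.symm tendsto_const_nhds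
      | succ m ih =>
        have heq : τ (m + 1) =ᶠ[nhds (0 : ℂ)] f ∘ τ m := hτs m
        have hwz : Tendsto (τ m) (nhdsWithin (0 : ℂ) {0}ᶜ) (nhds 0) := by
          have := (hτa m).continuousAt.tendsto
          rw [hτ0 m] at this
          exact this.mono_left nhdsWithin_le_nhds
        -- w/z → 1
        have hratio : Tendsto (fun z : ℂ => τ m z / z) (nhdsWithin 0 {0}ᶜ) (nhds 1) := by
          have h1 : Tendsto (fun z : ℂ => z ^ (k - 1) * ((τ m z - z) / z ^ k) + 1)
              (nhdsWithin 0 {0}ᶜ) (nhds 1) := by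
            have hz0 : Tendsto (fun z : ℂ => z ^ (k - 1)) (nhdsWithin 0 {0}ᶜ) (nhds 0) := by
              have : Tendsto (fun z : ℂ => z ^ (k - 1)) (nhds 0) (nhds 0) := by
                have := (continuous_pow (k - 1) (M := ℂ)).tendsto 0
                simpa [zero_pow (show k - 1 ≠ 0 by omega)] using this
              exact this.mono_left nhdsWithin_le_nhds
            have := (hz0.mul ih).add (tendsto_const_nhds (x := (1 : ℂ)))
            simpa using this
          refine h1.congr' ?_
          filter_upwards [self_mem_nhdsWithin] with z hz
          have hzne : z ≠ 0 := hz
          have hzk : z ^ k = z ^ (k - 1) * z := by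
            rw [← pow_succ]; congr 1; omega
          rw [hzk]
          field_simp
          ring
        have hgw : Tendsto (fun z : ℂ => g₀ (τ m z)) (nhdsWithin 0 {0}ᶜ) (nhds c) :=
          (hg₀a.continuousAt.tendsto).comp hwz
        have hbig : Tendsto (fun z : ℂ => (τ m z / z) ^ k * g₀ (τ m z) + (τ m z - z) / z ^ k)
            (nhdsWithin 0 {0}ᶜ) (nhds (((m : ℂ) + 1) * c)) := by
          have := ((hratio.pow k).mul hgw).add ih
          rw [show (1 : ℂ) ^ k * c + (m : ℂ) * c = ((m : ℂ) + 1) * c by ring] at this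
          exact this
        have : Tendsto (fun z : ℂ => (τ (m + 1) z - z) / z ^ k)
            (nhdsWithin 0 {0}ᶜ) (nhds (((m : ℂ) + 1) * c)) := by
          refine hbig.congr' ?_
          filter_upwards [nhdsWithin_le_nhds heq, hwz.eventually hev', self_mem_nhdsWithin]
            with z hz hhw hzne
          have hzne' : (z : ℂ) ≠ 0 := hzne
          have hsplit : τ (m + 1) z - z = h (τ m z) + (τ m z - z) := by
            rw [hz]; simp [hh, Function.comp]
          rw [hsplit, hhw]
          field_simp
          rw [div_pow, div_mul_eq_mul_div, div_mul_cancel₀ _ (pow_ne_zero k hzne')]; ring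
        simpa [Nat.cast_succ] using this
      -- end induction
    -- apply at N
    have hNlim := main N
    have hzero : Tendsto (fun z : ℂ => (τ N z - z) / z ^ k) (nhdsWithin 0 {0}ᶜ) (nhds 0) := by
      have : (fun z : ℂ => (τ N z - z) / z ^ k) =ᶠ[nhdsWithin 0 {0}ᶜ] fun _ => 0 := by
        filter_upwards [nhdsWithin_le_nhds hτN] with z hz
        simp [hz]
      exact Tendsto.congr' this.symm tendsto_const_nhds
    have : ((N : ℂ) * c) = 0 := tendsto_nhds_unique hNlim hzero
    have hNc : (N : ℂ) ≠ 0 := Nat.cast_ne_zero.mpr hN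
    exact hg₀0 (by
      have := mul_eq_zero.mp this
      rcases this with h' | h'
      · exact absurd h' hNc
      · exact h')

/-- For a finite group `G` acting faithfully by local analytic germs at `0 ∈ ℂ` fixing `0`,
the derivative at `0` gives an injective homomorphism `θ : G → ℂ` into the `|G|`-th roots
of unity; consequently `G` is cyclic. -/
theorem stabilizer_cyclic (G : Type*) [Group G] [Finite G] (σ : G → ℂ → ℂ)
    (hana : ∀ g : G, AnalyticAt ℂ (σ g) 0)
    (hfix : ∀ g : G, σ g 0 = 0)
    (hone : σ 1 =ᶠ[nhds (0 : ℂ)] id)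
    (hmul : ∀ g h : G, σ (g * h) =ᶠ[nhds (0 : ℂ)] (σ g ∘ σ h))
    (hfaithful : ∀ g : G, σ g =ᶠ[nhds (0 : ℂ)] id → g = 1) :
    deriv (σ 1) 0 = 1 ∧
    (∀ g h : G, deriv (σ (g * h)) 0 = deriv (σ g) 0 * deriv (σ h) 0) ∧
    (∀ g : G, (deriv (σ g) 0) ^ (Nat.card G) = 1) ∧
    Function.Injective (fun g : G => deriv (σ g) 0) ∧
    IsCyclic G := by
  have hdiff : ∀ g : G, DifferentiableAt ℂ (σ g) 0 := fun g => (hana g).differentiableAt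
  set θ : G → ℂ := fun g => deriv (σ g) 0 with hθ
  have h1 : θ 1 = 1 := by
    have := hone.deriv_eq
    simpa [hθ] using this
  have hm : ∀ g h : G, θ (g * h) = θ g * θ h := by
    intro g h
    have hc : deriv (σ (g * h)) 0 = deriv (σ g ∘ σ h) 0 := (hmul g h).deriv_eq
    have hd : DifferentiableAt ℂ (σ g) (σ h 0) := by rw [hfix h]; exact hdiff g
    rw [hθ]
    simp only []
    rw [hc, deriv_comp 0 hd (hdiff h), hfix h]
  -- θ as monoid hom
  let θ' : G →* ℂ := { toFun := θ, map_one' := h1, map_mul' := hm }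
  have hpow : ∀ g : G, θ g ^ Nat.card G = 1 := by
    intro g
    have : θ' (g ^ Nat.card G) = θ' g ^ Nat.card G := map_pow θ' g _
    rw [pow_card_eq_one'] at this
    simpa [θ', h1] using this.symm
  have hNne : Nat.card G ≠ 0 := Nat.card_pos.ne'
  have hθne : ∀ g : G, θ g ≠ 0 := by
    intro g hg0
    have := hpow g
    rw [hg0, zero_pow hNne] at this
    exact zero_ne_one this
  -- kernel lemma
  have hker : ∀ g : G, θ g = 1 → g = 1 := by
    intro g hg1
    apply hfaithful g
    refine aux_germ_id (hana g) (hfix g) hg1 (fun m => σ (g ^ m))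
      (fun m => hana _) (fun m => hfix _) (by simpa using hone) ?_ (Nat.card G) hNne ?_
    · intro m
      have := hmul g (g ^ m)
      rw [← pow_succ'] at this
      exact this
    · show σ (g ^ Nat.card G) =ᶠ[nhds (0 : ℂ)] id
      rw [pow_card_eq_one']
      exact hone
  have hinj : Function.Injective θ := by
    intro a b hab
    have h3 : θ (a * b⁻¹) = θ a * θ b⁻¹ := hm a b⁻¹
    have h4 : θ b * θ b⁻¹ = 1 := by rw [← hm b b⁻¹, mul_inv_cancel, h1]
    have hab' : θ a = θ b := hab
    have h6 : θ (a * b⁻¹) = 1 := by rw [h3, hab', h4]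
    exact mul_inv_eq_one.mp (hker _ h6)
  refine ⟨h1, hm, hpow, hinj, ?_⟩
  exact isCyclic_of_subgroup_isDomain θ' hinj
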